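/- arXiv:1811.05338 — 2 statements merged into one kernel-verified Lean document; each statement's English description precedes it below -/
import Mathlib

section
/- Let η(ρ, ε) = f₂(ρ)·ε + f₃(ρ) with f₂ nowhere zero, let Φ₁(ρ, ε) = f₁(ρ), let q₁(ρ, ε) = Q(ρ) where Q'(ρ) = f₁'(ρ)/f₂(ρ), and let p(ρ, ε) = −ρ²(f₂'(ρ)ε + f₃'(ρ))/f₂(ρ), where f₁, f₂, f₃ are C¹ functions of ρ. Then the three gas-dynamics constraint equations ∂Φ₁/∂ρ − (∂η/∂ε)(∂q₁/∂ρ) = 0, ∂Φ₁/∂ε − (∂η/∂ε)(∂q₁/∂ε) = 0, and p(∂η/∂ε) + ρ²(∂η/∂ρ) = 0 all hold (for ρ ≠ 0). -/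
theorem gas_case2_verification (f₁ f₂ f₃ Q : ℝ → ℝ)
    (hf₁ : ContDiff ℝ 1 f₁) (hf₂ : ContDiff ℝ 1 f₂) (hf₃ : ContDiff ℝ 1 f₃)
    (hQ : ContDiff ℝ 1 Q)
    (hf₂ne : ∀ ρ : ℝ, f₂ ρ ≠ 0)
    (hQ' : ∀ ρ : ℝ, deriv Q ρ = deriv f₁ ρ / f₂ ρ)
    (η Φ₁ q₁ p : ℝ × ℝ → ℝ)
    (hηdef : ∀ x : ℝ × ℝ, η x = f₂ x.1 * x.2 + f₃ x.1)
    (hΦdef : ∀ x : ℝ × ℝ, Φ₁ x = f₁ x.1)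
    (hqdef : ∀ x : ℝ × ℝ, q₁ x = Q x.1)
    (hpdef : ∀ x : ℝ × ℝ, p x = -(x.1 ^ 2 * (deriv f₂ x.1 * x.2 + deriv f₃ x.1)) / f₂ x.1) :
    ∀ x : ℝ × ℝ, x.1 ≠ 0 →
      (fderiv ℝ Φ₁ x (1, 0) - fderiv ℝ η x (0, 1) * fderiv ℝ q₁ x (1, 0) = 0 ∧
       fderiv ℝ Φ₁ x (0, 1) - fderiv ℝ η x (0, 1) * fderiv ℝ q₁ x (0, 1) = 0 ∧
       p x * fderiv ℝ η x (0, 1) + x.1 ^ 2 * fderiv ℝ η x (1, 0) = 0) := by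
  have hη : η = fun x : ℝ × ℝ => f₂ x.1 * x.2 + f₃ x.1 := funext hηdef
  have hΦ : Φ₁ = fun x : ℝ × ℝ => f₁ x.1 := funext hΦdef
  have hq : q₁ = fun x : ℝ × ℝ => Q x.1 := funext hqdef
  subst hη hΦ hq
  rintro ⟨ρ, ε⟩ hx
  simp only at hx
  have d1 : HasFDerivAt (fun y : ℝ × ℝ => f₁ y.1)
      ((deriv f₁ ρ) • ContinuousLinearMap.fst ℝ ℝ ℝ) (ρ, ε) :=
    ((hf₁.differentiable one_ne_zero ρ).hasDerivAt).comp_hasFDerivAt _ hasFDerivAt_fst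
  have d2 : HasFDerivAt (fun y : ℝ × ℝ => f₂ y.1)
      ((deriv f₂ ρ) • ContinuousLinearMap.fst ℝ ℝ ℝ) (ρ, ε) :=
    ((hf₂.differentiable one_ne_zero ρ).hasDerivAt).comp_hasFDerivAt _ hasFDerivAt_fst
  have d3 : HasFDerivAt (fun y : ℝ × ℝ => f₃ y.1)
      ((deriv f₃ ρ) • ContinuousLinearMap.fst ℝ ℝ ℝ) (ρ, ε) :=
    ((hf₃.differentiable one_ne_zero ρ).hasDerivAt).comp_hasFDerivAt _ hasFDerivAt_fst
  have dQ : HasFDerivAt (fun y : ℝ × ℝ => Q y.1)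
      ((deriv Q ρ) • ContinuousLinearMap.fst ℝ ℝ ℝ) (ρ, ε) :=
    ((hQ.differentiable one_ne_zero ρ).hasDerivAt).comp_hasFDerivAt _ hasFDerivAt_fst
  have dη : HasFDerivAt (fun y : ℝ × ℝ => f₂ y.1 * y.2 + f₃ y.1)
      ((f₂ ρ • ContinuousLinearMap.snd ℝ ℝ ℝ +
        ε • ((deriv f₂ ρ) • ContinuousLinearMap.fst ℝ ℝ ℝ)) +
        (deriv f₃ ρ) • ContinuousLinearMap.fst ℝ ℝ ℝ) (ρ, ε) :=
    (d2.mul (hasFDerivAt_snd)).add d3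
  have hfΦ := d1.fderiv
  have hfq := dQ.fderiv
  have hfη := dη.fderiv
  rw [hfΦ, hfq, hfη]
  simp only [ContinuousLinearMap.add_apply, ContinuousLinearMap.smul_apply,
    ContinuousLinearMap.coe_fst', ContinuousLinearMap.coe_snd', smul_eq_mul,
    hpdef]
  refine ⟨?_, ?_, ?_⟩
  · simp only [mul_one, mul_zero, add_zero]
    rw [hQ', mul_comm (f₂ ρ), div_mul_cancel₀ _ (hf₂ne ρ), sub_self]
  · ring
  · simp only [mul_one, mul_zero, add_zero, zero_add]
    rw [div_mul_cancel₀ _ (hf₂ne ρ)]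
    ring
end

section
/- Let C₀, C₁, C₂ be constants, A : ℝ → ℝ a C¹ function, and η(ρ, ρ_t, θ), Φ₁(ρ,θ), Φ₂(ρ,θ) arbitrary C¹ functions with ∂η/∂θ nowhere zero and C₀ ≠ 0 (so that ∂ε/∂θ = C₀∂η/∂θ ≠ 0). Define ε = A(ρ) + C₀η, q_i = C₀Φ_i + C_i (i = 1,2), T₁₂ = 0, T₁₁ = T₂₂ = −ρ²A'(ρ). Then these functions satisfy the non-simple fluid constraint system: (∂ε/∂θ)(∂Φ_i/∂ρ) − (∂η/∂θ)(∂q_i/∂ρ) = 0, (∂ε/∂θ)(∂Φ_i/∂θ) − (∂η/∂θ)(∂q_i/∂θ) = 0 for i=1,2; (∂ε/∂θ)(∂η/∂ρ_t) − (∂η/∂θ)(∂ε/∂ρ_t) = 0; and ρ²((∂ε/∂ρ)(∂η/∂θ) − (∂ε/∂θ)(∂η/∂ρ))δ_{ij} + (∂η/∂θ)T_{ij} = 0 for i,j = 1,2. -/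
theorem nonsimple_fluid_verification (C₀ C₁ C₂ : ℝ) (hC₀ : C₀ ≠ 0)
    (A : ℝ → ℝ) (hA : ContDiff ℝ 1 A)
    (η : ℝ × ℝ × ℝ → ℝ) (hη : ContDiff ℝ 1 η)
    (hηθ : ∀ x : ℝ × ℝ × ℝ, fderiv ℝ η x (0, 0, 1) ≠ 0)
    (Φ : Fin 2 → ℝ × ℝ → ℝ) (hΦ : ∀ i, ContDiff ℝ 1 (Φ i))
    (ε : ℝ × ℝ × ℝ → ℝ) (hεdef : ε = fun x => A x.1 + C₀ * η x)
    (q : Fin 2 → ℝ × ℝ → ℝ)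
    (hqdef : ∀ i y, q i y = C₀ * Φ i y + (if i = 0 then C₁ else C₂))
    (T : Fin 2 → Fin 2 → ℝ → ℝ)
    (hTdef : ∀ i j ρ, T i j ρ = if i = j then -(ρ ^ 2 * deriv A ρ) else 0) :
    ∀ x : ℝ × ℝ × ℝ, ∀ i : Fin 2,
      (fderiv ℝ ε x (0, 0, 1) * fderiv ℝ (Φ i) (x.1, x.2.2) (1, 0)
        - fderiv ℝ η x (0, 0, 1) * fderiv ℝ (q i) (x.1, x.2.2) (1, 0) = 0) ∧
      (fderiv ℝ ε x (0, 0, 1) * fderiv ℝ (Φ i) (x.1, x.2.2) (0, 1)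
        - fderiv ℝ η x (0, 0, 1) * fderiv ℝ (q i) (x.1, x.2.2) (0, 1) = 0) ∧
      (fderiv ℝ ε x (0, 0, 1) * fderiv ℝ η x (0, 1, 0)
        - fderiv ℝ η x (0, 0, 1) * fderiv ℝ ε x (0, 1, 0) = 0) ∧
      (∀ j : Fin 2,
        x.1 ^ 2 * (fderiv ℝ ε x (1, 0, 0) * fderiv ℝ η x (0, 0, 1)
          - fderiv ℝ ε x (0, 0, 1) * fderiv ℝ η x (1, 0, 0)) * (if i = j then 1 else 0)
          + fderiv ℝ η x (0, 0, 1) * T i j x.1 = 0) := by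
  subst hεdef
  have hA' : Differentiable ℝ A := hA.differentiable one_ne_zero
  have hη' : Differentiable ℝ η := hη.differentiable one_ne_zero
  have hΦ' : ∀ i, Differentiable ℝ (Φ i) := fun i => (hΦ i).differentiable one_ne_zero
  intro x i
  -- derivative of ε
  have hε : ∀ v : ℝ × ℝ × ℝ,
      fderiv ℝ (fun x : ℝ × ℝ × ℝ => A x.1 + C₀ * η x) x v
        = v.1 * deriv A x.1 + C₀ * fderiv ℝ η x v := by
    intro v
    have h1 : DifferentiableAt ℝ (fun x : ℝ × ℝ × ℝ => A x.1) x :=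
      (hA' x.1).comp x differentiableAt_fst
    have h2 : DifferentiableAt ℝ (fun x : ℝ × ℝ × ℝ => C₀ * η x) x :=
      (hη' x).const_mul C₀
    have hcomp : fderiv ℝ (fun x : ℝ × ℝ × ℝ => A x.1) x
        = (fderiv ℝ A x.1).comp (fderiv ℝ (Prod.fst) x) :=
      fderiv_comp x (hA' x.1) differentiableAt_fst
    have hAv : fderiv ℝ A x.1 v.1 = v.1 * deriv A x.1 := by
      rw [show v.1 = v.1 • (1 : ℝ) by simp, map_smul, fderiv_apply_one_eq_deriv]
      simp [smul_eq_mul]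
    rw [fderiv_fun_add h1 h2, fderiv_const_mul (hη' x) C₀]
    simp [hcomp, fderiv_fst, hAv]
  -- derivative of q
  have hq : ∀ v : ℝ × ℝ,
      fderiv ℝ (q i) (x.1, x.2.2) v = C₀ * fderiv ℝ (Φ i) (x.1, x.2.2) v := by
    intro v
    have hqi : q i = fun y => C₀ * Φ i y + (if i = 0 then C₁ else C₂) :=
      funext (hqdef i)
    rw [hqi]
    have h1 : DifferentiableAt ℝ (fun y : ℝ × ℝ => C₀ * Φ i y) (x.1, x.2.2) :=
      (hΦ' i _).const_mul C₀
    rw [fderiv_fun_add h1 (differentiableAt_const _), fderiv_fun_const,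
      fderiv_const_mul (hΦ' i _) C₀]
    simp
  refine ⟨?_, ?_, ?_, ?_⟩
  · rw [hε, hq]; ring
  · rw [hε, hq]; ring
  · rw [hε, hε]; ring
  · intro j
    rw [hε, hε, hTdef]
    rcases eq_or_ne i j with h | h <;> simp [h] <;> ring
end
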